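/- Define x_τ : S → K by x_τ(u) = 1 if ⟨p_r, u⟩ = 0 for all r = 1, …, k, and x_τ(u) = 0 otherwise (the distinguished point of the face τ). Then x_τ is a point, and it is a two-sided identity for *: x_τ * x = x * x_τ = x for every point x. (This is the neutral-element part of Theorem 1.) -/
import Mathlib


open Finset

def pairZ {n : ℕ} (v u : Fin n → ℤ) : ℤ := ∑ i, v i * u i

def InS {n m : ℕ} (q : Fin m → Fin n → ℤ) (u : Fin n → ℤ) : Prop :=
  ∀ j, 0 ≤ pairZ (q j) u

def IsPoint {n m : ℕ} {K : Type*} [Field K] (q : Fin m → Fin n → ℤ)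
    (x : (Fin n → ℤ) → K) : Prop :=
  x 0 = 1 ∧ ∀ u v : Fin n → ℤ, InS q u → InS q v → x (u + v) = x u * x v

def Compatible {n m k : ℕ} (hkm : k ≤ m) (q : Fin m → Fin n → ℤ)
    (e : Fin k → Fin n → ℤ) : Prop :=
  (∀ r s : Fin k, pairZ (q (Fin.castLE hkm s)) (e r) = if r = s then -1 else 0) ∧
  (∀ (r : Fin k) (j : Fin m), k ≤ (j : ℕ) → 0 ≤ pairZ (q j) (e r))

noncomputable def rmul {n m k : ℕ} {K : Type*} [Field K] (hkm : k ≤ m)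
    (q : Fin m → Fin n → ℤ) (e1 e2 : Fin k → Fin n → ℤ)
    (x y : (Fin n → ℤ) → K) : (Fin n → ℤ) → K :=
  fun u =>
    ∑ i ∈ Fintype.piFinset (fun r : Fin k =>
        Finset.range ((pairZ (q (Fin.castLE hkm r)) u).toNat + 1)),
      (∏ r : Fin k, ((pairZ (q (Fin.castLE hkm r)) u).toNat.choose (i r) : K)) *
        x (u + ∑ r : Fin k, (i r : ℤ) • e2 r) *
        y (u + ∑ r : Fin k, (pairZ (q (Fin.castLE hkm r)) u - (i r : ℤ)) • e1 r)

noncomputable def xtau {n m k : ℕ} (K : Type*) [Field K] (hkm : k ≤ m)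
    (q : Fin m → Fin n → ℤ) : (Fin n → ℤ) → K :=
  fun u => if ∀ r : Fin k, pairZ (q (Fin.castLE hkm r)) u = 0 then 1 else 0

lemma pairZ_zero' {n : ℕ} (v : Fin n → ℤ) : pairZ v 0 = 0 := by simp [pairZ]

lemma pairZ_add' {n : ℕ} (v u w : Fin n → ℤ) : pairZ v (u + w) = pairZ v u + pairZ v w := by
  simp [pairZ, mul_add, Finset.sum_add_distrib]

lemma pairZ_smul' {n : ℕ} (v : Fin n → ℤ) (c : ℤ) (w : Fin n → ℤ) :
    pairZ v (c • w) = c * pairZ v w := by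
  simp [pairZ, Finset.mul_sum, mul_left_comm]

lemma pairZ_sum' {n k : ℕ} (v : Fin n → ℤ) (f : Fin k → Fin n → ℤ) :
    pairZ v (∑ r, f r) = ∑ r, pairZ v (f r) := by
  simp only [pairZ, Finset.sum_apply, Finset.mul_sum]
  exact Finset.sum_comm

lemma pair_shift {n m k : ℕ} (hkm : k ≤ m) (q : Fin m → Fin n → ℤ) (e : Fin k → Fin n → ℤ)
    (he : ∀ r s : Fin k, pairZ (q (Fin.castLE hkm s)) (e r) = if r = s then -1 else 0)
    (u : Fin n → ℤ) (c : Fin k → ℤ) (s : Fin k) :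
    pairZ (q (Fin.castLE hkm s)) (u + ∑ r, c r • e r)
      = pairZ (q (Fin.castLE hkm s)) u - c s := by
  rw [pairZ_add', pairZ_sum']
  simp only [pairZ_smul', he, mul_ite, mul_neg_one, mul_zero]
  rw [Finset.sum_ite_eq' Finset.univ s (fun r => -c r)]
  simp [sub_eq_add_neg]

theorem statement_3 {n m k : ℕ} {K : Type*} [Field K] [CharZero K]
    (hn : 1 ≤ n) (hk : 1 ≤ k) (hkm : k ≤ m)
    (q : Fin m → Fin n → ℤ) (e1 e2 : Fin k → Fin n → ℤ)
    (he1 : Compatible hkm q e1) (he2 : Compatible hkm q e2) :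
    IsPoint q (xtau K hkm q) ∧
    ∀ x : (Fin n → ℤ) → K, IsPoint q x → ∀ u : Fin n → ℤ, InS q u →
      rmul hkm q e1 e2 (xtau K hkm q) x u = x u ∧
      rmul hkm q e1 e2 x (xtau K hkm q) u = x u := by
  constructor
  · constructor
    · simp [xtau, pairZ_zero']
    · intro u v hu hv
      by_cases huv : (∀ r : Fin k, pairZ (q (Fin.castLE hkm r)) u = 0) ∧
          (∀ r : Fin k, pairZ (q (Fin.castLE hkm r)) v = 0)
      · have hsum : ∀ r : Fin k, pairZ (q (Fin.castLE hkm r)) (u + v) = 0 := by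
          intro r; rw [pairZ_add', huv.1 r, huv.2 r]; ring
        simp [xtau, hsum, huv.1, huv.2]
      · have h1 : ¬ ∀ r : Fin k, pairZ (q (Fin.castLE hkm r)) (u + v) = 0 := by
          intro hall
          apply huv
          constructor <;> intro r <;>
          · have h := hall r
            rw [pairZ_add'] at h
            have h1 := hu (Fin.castLE hkm r)
            have h2 := hv (Fin.castLE hkm r)
            omega
        simp only [xtau, if_neg h1]
        rcases not_and_or.mp huv with h | h
        · rw [if_neg h, zero_mul]
        · rw [if_neg h, mul_zero]
  · intro x hx u hu
    have hdc : ∀ r : Fin k,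
        ((pairZ (q (Fin.castLE hkm r)) u).toNat : ℤ) = pairZ (q (Fin.castLE hkm r)) u :=
      fun r => Int.toNat_of_nonneg (hu _)
    constructor
    · -- xtau * x = x
      unfold rmul
      rw [Finset.sum_eq_single_of_mem
          (fun r : Fin k => (pairZ (q (Fin.castLE hkm r)) u).toNat)
          (by simp [Fintype.mem_piFinset, Nat.lt_succ_self])]
      · have hcond : ∀ s : Fin k, pairZ (q (Fin.castLE hkm s))
            (u + ∑ r : Fin k, (((pairZ (q (Fin.castLE hkm r)) u).toNat : ℤ)) • e2 r) = 0 := by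
          intro s
          rw [pair_shift hkm q e2 he2.1, hdc]
          ring
        have h0 : ∀ r : Fin k,
            pairZ (q (Fin.castLE hkm r)) u - ((pairZ (q (Fin.castLE hkm r)) u).toNat : ℤ) = 0 := by
          intro r; rw [hdc]; ring
        have hsum : (∑ r : Fin k,
            (pairZ (q (Fin.castLE hkm r)) u - ((pairZ (q (Fin.castLE hkm r)) u).toNat : ℤ)) • e1 r)
            = 0 := by
          apply Finset.sum_eq_zero
          intro r _
          rw [h0 r, zero_smul]
        simp only [xtau]
        rw [if_pos hcond, hsum, add_zero]
        simp only [Nat.choose_self, Nat.cast_one, Finset.prod_const_one, one_mul, mul_one]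
      · intro i _ hi
        have hne : ¬ ∀ s : Fin k,
            pairZ (q (Fin.castLE hkm s)) (u + ∑ r : Fin k, ((i r : ℤ)) • e2 r) = 0 := by
          intro hall
          apply hi
          funext s
          have h := hall s
          rw [pair_shift hkm q e2 he2.1] at h
          have h2 := hdc s
          omega
        simp only [xtau]
        rw [if_neg hne, mul_zero, zero_mul]
    · -- x * xtau = x
      unfold rmul
      rw [Finset.sum_eq_single_of_mem (fun _ : Fin k => (0 : ℕ))
          (by simp [Fintype.mem_piFinset])]
      · have hcond : ∀ s : Fin k, pairZ (q (Fin.castLE hkm s))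
            (u + ∑ r : Fin k,
              (pairZ (q (Fin.castLE hkm r)) u - ((0 : ℕ) : ℤ)) • e1 r) = 0 := by
          intro s
          rw [pair_shift hkm q e1 he1.1]
          ring
        simp only [xtau]
        rw [if_pos hcond, mul_one]
        have hsum : (∑ r : Fin k, (((0 : ℕ) : ℤ)) • e2 r) = 0 := by
          apply Finset.sum_eq_zero
          intro r _
          rw [Nat.cast_zero, zero_smul]
        rw [hsum, add_zero]
        simp only [Nat.choose_zero_right, Nat.cast_one, Finset.prod_const_one, one_mul]
      · intro i _ hi
        have hne : ¬ ∀ s : Fin k, pairZ (q (Fin.castLE hkm s))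
            (u + ∑ r : Fin k,
              (pairZ (q (Fin.castLE hkm r)) u - (i r : ℤ)) • e1 r) = 0 := by
          intro hall
          apply hi
          funext s
          have h := hall s
          rw [pair_shift hkm q e1 he1.1] at h
          omega
        simp only [xtau]
        rw [if_neg hne, mul_zero]
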